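/- Let H be a finite hypergraph with minimum set cover number tau(H). In any cost-minimizing ordering sigma of V(H), the first vertex covers at least |E(H)|/tau(H) edges; that is, r_sigma(1) >= |E(H)|/tau(H). -/

import Mathlib

open Finset

/-- Position at which hyperedge `e` is first hit by the ordering `σ`. -/
noncomputable def firstHit {α : Type*} (σ : α → ℕ) (e : Finset α) : ℕ :=
  sInf (σ '' ↑e)

/-- Total cost of an ordering: each edge pays the position of its first vertex. -/
noncomputable def totalCost {α : Type*} (E : Finset (Finset α)) (σ : α → ℕ) : ℕ :=
  ∑ e ∈ E, firstHit σ e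

open scoped Classical in
/-- Effective coverage of position `i`: the number of edges first hit at `i`. -/
noncomputable def coverage {α : Type*} (E : Finset (Finset α)) (σ : α → ℕ) (i : ℕ) : ℕ :=
  (E.filter fun e => firstHit σ e = i).card

/-- An ordering of the vertex set `V`: a bijection onto positions `{1, ..., |V|}`. -/
def IsOrdering {α : Type*} (V : Finset α) (σ : α → ℕ) : Prop :=
  Set.BijOn σ ↑V (Set.Icc 1 V.card)


/-- A set cover: a set of vertices intersecting every hyperedge. -/
def IsSetCover {α : Type*} [DecidableEq α] (E : Finset (Finset α)) (S : Finset α) : Prop :=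
  ∀ e ∈ E, (e ∩ S).Nonempty

/-- helper: a witness attaining the first hit -/
lemma firstHit_exists {α : Type*} (σ : α → ℕ) {e : Finset α} (he : e.Nonempty) :
    ∃ x ∈ e, σ x = firstHit σ e := by
  obtain ⟨x, hx⟩ := he
  have hne : (σ '' (↑e : Set α)).Nonempty := ⟨σ x, x, hx, rfl⟩
  obtain ⟨y, hy, hyeq⟩ := Nat.sInf_mem hne
  exact ⟨y, hy, hyeq⟩

lemma firstHit_le {α : Type*} (σ : α → ℕ) {e : Finset α} {x : α} (hx : x ∈ e) :
    firstHit σ e ≤ σ x := Nat.sInf_le ⟨x, hx, rfl⟩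

/-- helper: swapping two values inside the position interval is a bijection of it -/
lemma swap_bijOn {n a b : ℕ} (ha : a ∈ Set.Icc 1 n) (hb : b ∈ Set.Icc 1 n) :
    Set.BijOn (Equiv.swap a b) (Set.Icc 1 n) (Set.Icc 1 n) := by
  have hmap : ∀ x ∈ Set.Icc 1 n, Equiv.swap a b x ∈ Set.Icc 1 n := by
    intro x hx
    rcases eq_or_ne x a with rfl | hxa
    · rwa [Equiv.swap_apply_left]
    rcases eq_or_ne x b with rfl | hxb
    · rwa [Equiv.swap_apply_right]
    · rwa [Equiv.swap_apply_of_ne_of_ne hxa hxb]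
  exact ⟨hmap, (Equiv.swap a b).injective.injOn, fun y hy =>
    ⟨Equiv.swap a b y, hmap y hy, Equiv.swap_apply_self _ _ _⟩⟩

lemma nat_helper (a b i : ℕ) (h2 : 2 ≤ i) (h : a * i + b ≤ b * i + a) : a ≤ b := by
  by_contra hab
  push_neg at hab
  have h1 : b + 1 ≤ a := hab
  nlinarith

/-- In any cost-minimizing ordering, the first vertex covers at least `|E(H)|/τ(H)` edges,
where `S` is a minimum set cover (so `|S| = τ(H)`). -/
theorem stmt_5 {α : Type*} [DecidableEq α] (V : Finset α) (E : Finset (Finset α))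
    (hE : ∀ e ∈ E, e.Nonempty ∧ e ⊆ V)
    (S : Finset α) (hSV : S ⊆ V) (hScov : IsSetCover E S)
    (hSmin : ∀ T ⊆ V, IsSetCover E T → S.card ≤ T.card)
    (σ : α → ℕ) (hσ : IsOrdering V σ)
    (hopt : ∀ τ : α → ℕ, IsOrdering V τ → totalCost E σ ≤ totalCost E τ) :
    (E.card : ℝ) / (S.card : ℝ) ≤ (coverage E σ 1 : ℝ) := by
  classical
  rcases E.eq_empty_or_nonempty with rfl | hEne
  · simp
  obtain ⟨e₀, he₀⟩ := hEne
  set n := V.card with hn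
  have hVne : V.Nonempty := ⟨(hE e₀ he₀).1.choose, (hE e₀ he₀).2 (hE e₀ he₀).1.choose_spec⟩
  have hn1 : 1 ≤ n := Finset.card_pos.2 hVne
  have htS : 1 ≤ S.card :=
    Finset.card_pos.2 ⟨(hScov e₀ he₀).choose,
      (Finset.mem_inter.1 (hScov e₀ he₀).choose_spec).2⟩
  set t := S.card with ht
  set m := E.card with hm
  have htn : t ≤ n := Finset.card_le_card hSV
  have hmap := hσ.mapsTo
  have hinj := hσ.injOn
  -- the first vertex
  have h1Icc : (1 : ℕ) ∈ Set.Icc 1 n := Set.mem_Icc.2 ⟨le_refl _, hn1⟩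
  obtain ⟨v₁, hv₁V, hv₁⟩ : ∃ v ∈ V, σ v = 1 := by
    obtain ⟨v, hv, hveq⟩ := hσ.surjOn h1Icc
    exact ⟨v, hv, hveq⟩
  -- basic firstHit facts
  have hf1 : ∀ e ∈ E, 1 ≤ firstHit σ e := by
    intro e he
    obtain ⟨x, hx, hxeq⟩ := firstHit_exists σ (hE e he).1
    have := hmap ((hE e he).2 hx)
    rw [Set.mem_Icc] at this
    omega
  have hfv₁ : ∀ e ∈ E, v₁ ∈ e → firstHit σ e = 1 := by
    intro e he hv
    have h2 := firstHit_le σ hv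
    rw [hv₁] at h2
    exact le_antisymm h2 (hf1 e he)
  have hfv₁' : ∀ e ∈ E, firstHit σ e = 1 → v₁ ∈ e := by
    intro e he hfe
    obtain ⟨x, hx, hxeq⟩ := firstHit_exists σ (hE e he).1
    rw [hfe] at hxeq
    have : x = v₁ := hinj ((hE e he).2 hx) hv₁V (by rw [hxeq, hv₁])
    rwa [← this]
  set c := (E.filter fun e => firstHit σ e = 1).card with hc
  -- ==================== STEP 1 : swap lemma ====================
  have hckey : ∀ i, 2 ≤ i → (E.filter fun e => firstHit σ e = i).card ≤ c := by
    intro i hi2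
    rcases (E.filter fun e => firstHit σ e = i).eq_empty_or_nonempty with hFe | ⟨e₁, he₁⟩
    · simp [hFe]
    rw [Finset.mem_filter] at he₁
    obtain ⟨he₁E, hfe₁⟩ := he₁
    obtain ⟨u, hue₁, hu⟩ := firstHit_exists σ (hE e₁ he₁E).1
    rw [hfe₁] at hu
    have huV : u ∈ V := (hE e₁ he₁E).2 hue₁
    have hiIcc : i ∈ Set.Icc 1 n := hu ▸ hmap huV
    set σ' : α → ℕ := fun x => Equiv.swap 1 i (σ x) with hσ'def
    have hσ'ord : IsOrdering V σ' := (swap_bijOn h1Icc hiIcc).comp hσ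
    have hcost := hopt σ' hσ'ord
    -- per-edge facts
    have hfitA : ∀ e ∈ E, u ∈ e → firstHit σ' e ≤ 1 := by
      intro e _ hue
      exact Nat.sInf_le ⟨u, hue, by simp [hσ'def, hu]⟩
    have hfitB : ∀ e ∈ E, v₁ ∈ e → firstHit σ' e ≤ i := by
      intro e _ hv
      exact Nat.sInf_le ⟨v₁, hv, by simp [hσ'def, hv₁]⟩
    have hfitC : ∀ e ∈ E, u ∉ e → v₁ ∉ e → firstHit σ' e = firstHit σ e := by
      intro e he huu hvv
      unfold firstHit
      congr 1
      apply Set.image_congr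
      intro x hx
      have hxV : x ∈ V := (hE e he).2 hx
      have hx1 : σ x ≠ 1 := fun h => hvv (by
        have : x = v₁ := hinj hxV hv₁V (by rw [h, hv₁])
        rwa [← this])
      have hxi : σ x ≠ i := fun h => huu (by
        have : x = u := hinj hxV huV (by rw [h, hu])
        rwa [← this])
      exact Equiv.swap_apply_of_ne_of_ne hx1 hxi
    -- partition of E
    set A := E.filter (fun e => u ∈ e) with hA
    set B := E.filter (fun e => u ∉ e ∧ v₁ ∈ e) with hB
    set C := E.filter (fun e => u ∉ e ∧ v₁ ∉ e) with hC
    have hsplit : ∀ g : α → ℕ, ∑ e ∈ E, firstHit g e =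
        ∑ e ∈ A, firstHit g e + (∑ e ∈ B, firstHit g e + ∑ e ∈ C, firstHit g e) := by
      intro g
      rw [← Finset.sum_filter_add_sum_filter_not E (fun e => u ∈ e) (fun e => firstHit g e)]
      congr 1
      rw [← Finset.sum_filter_add_sum_filter_not (E.filter fun e => u ∉ e)
        (fun e => v₁ ∈ e) (fun e => firstHit g e), Finset.filter_filter, Finset.filter_filter]
    have hAmem : ∀ e ∈ A, e ∈ E ∧ u ∈ e := fun e he => Finset.mem_filter.1 he
    have hBmem : ∀ e ∈ B, e ∈ E ∧ u ∉ e ∧ v₁ ∈ e := fun e he => Finset.mem_filter.1 he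
    have hCmem : ∀ e ∈ C, e ∈ E ∧ u ∉ e ∧ v₁ ∉ e := fun e he => Finset.mem_filter.1 he
    have hCeq : ∑ e ∈ C, firstHit σ' e = ∑ e ∈ C, firstHit σ e :=
      Finset.sum_congr rfl fun e he =>
        hfitC e (hCmem e he).1 (hCmem e he).2.1 (hCmem e he).2.2
    have hA' : ∑ e ∈ A, firstHit σ' e ≤ A.card := by
      have := Finset.sum_le_card_nsmul A (fun e => firstHit σ' e) 1
        (fun e he => hfitA e (hAmem e he).1 (hAmem e he).2)
      simpa using this
    have hB' : ∑ e ∈ B, firstHit σ' e ≤ B.card * i := by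
      have := Finset.sum_le_card_nsmul B (fun e => firstHit σ' e) i
        (fun e he => hfitB e (hBmem e he).1 (hBmem e he).2.2)
      simpa [smul_eq_mul] using this
    have key1 : ∑ e ∈ A, firstHit σ e + ∑ e ∈ B, firstHit σ e ≤ A.card + B.card * i := by
      have h := hcost
      unfold totalCost at h
      rw [hsplit σ, hsplit σ', hCeq] at h
      omega
    have hBf : ∑ e ∈ B, firstHit σ e = B.card := by
      rw [Finset.sum_congr rfl (fun e he => hfv₁ e (hBmem e he).1 (hBmem e he).2.2)]
      simp
    set D := E.filter (fun e => firstHit σ e = i) with hD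
    have hDsub : D ⊆ A := by
      intro e he
      rw [Finset.mem_filter] at he ⊢
      obtain ⟨heE, hfi⟩ := he
      obtain ⟨x, hx, hxeq⟩ := firstHit_exists σ (hE e heE).1
      rw [hfi] at hxeq
      have : x = u := hinj ((hE e heE).2 hx) huV (by rw [hxeq, hu])
      exact ⟨heE, this ▸ hx⟩
    have hDA : A.card + D.card * i ≤ ∑ e ∈ A, firstHit σ e + D.card := by
      have hsd : ∑ e ∈ A \ D, firstHit σ e + ∑ e ∈ D, firstHit σ e
          = ∑ e ∈ A, firstHit σ e := Finset.sum_sdiff hDsub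
      have hsd1 : (A \ D).card ≤ ∑ e ∈ A \ D, firstHit σ e := by
        have := Finset.card_nsmul_le_sum (A \ D) (fun e => firstHit σ e) 1
          (fun e he => hf1 e (hAmem e (Finset.mem_sdiff.1 he).1).1)
        simpa using this
      have hsdD : ∑ e ∈ D, firstHit σ e = D.card * i := by
        rw [Finset.sum_congr rfl (fun e he => (Finset.mem_filter.1 he).2)]
        rw [Finset.sum_const, smul_eq_mul]
      have hcards : (A \ D).card + D.card = A.card := Finset.card_sdiff_add_card_eq_card hDsub
      omega
    have hBc : B.card ≤ c := by
      apply Finset.card_le_card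
      intro e he
      rw [Finset.mem_filter]
      exact ⟨(hBmem e he).1, hfv₁ e (hBmem e he).1 (hBmem e he).2.2⟩
    have hfinal : D.card * i + B.card ≤ B.card * i + D.card := by
      have h1 := hDA
      have h2 := key1
      have h3 := hBf
      omega
    exact le_trans (nat_helper D.card B.card i hi2 hfinal) hBc
  -- ==================== STEP 2 : prefix counting ====================
  have hDle : ∀ j, (E.filter fun e => firstHit σ e ≤ j).card ≤ j * c := by
    intro j
    induction j with
    | zero =>
      have hempty : E.filter (fun e => firstHit σ e ≤ 0) = ∅ := by
        apply Finset.filter_eq_empty_iff.2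
        intro e he
        have := hf1 e he
        omega
      rw [hempty]
      simp
    | succ j ih =>
      have hsplit : (E.filter fun e => firstHit σ e ≤ j + 1).card ≤
          (E.filter fun e => firstHit σ e ≤ j).card +
          (E.filter fun e => firstHit σ e = j + 1).card := by
        calc (E.filter fun e => firstHit σ e ≤ j + 1).card
            ≤ ((E.filter fun e => firstHit σ e ≤ j) ∪
               (E.filter fun e => firstHit σ e = j + 1)).card := by
              apply Finset.card_le_card
              intro e he
              rw [Finset.mem_filter] at he
              rw [Finset.mem_union, Finset.mem_filter, Finset.mem_filter]
              rcases eq_or_lt_of_le he.2 with heq | hlt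
              · exact Or.inr ⟨he.1, heq⟩
              · exact Or.inl ⟨he.1, by omega⟩
          _ ≤ _ := Finset.card_union_le _ _
      have hcj : (E.filter fun e => firstHit σ e = j + 1).card ≤ c := by
        rcases Nat.lt_or_ge j 1 with hj | hj
        · have hj0 : j = 0 := by omega
          subst hj0
          exact le_of_eq (by rw [hc])
        · exact hckey (j + 1) (by omega)
      rw [Nat.succ_mul]
      exact le_trans hsplit (add_le_add ih hcj)
  have hM : ∀ j, m ≤ j * c + (E.filter fun e => j + 1 ≤ firstHit σ e).card := by
    intro j
    have hpart := Finset.card_filter_add_card_filter_not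
      (s := E) (p := fun e => firstHit σ e ≤ j)
    have hco : E.filter (fun e => ¬ firstHit σ e ≤ j)
        = E.filter (fun e => j + 1 ≤ firstHit σ e) :=
      Finset.filter_congr (fun e _ => by omega)
    rw [hco] at hpart
    have := hDle j
    omega
  -- ==================== STEP 3 : cost lower bound summed ====================
  have hSumA : ∑ j ∈ Finset.range (t + 1), (E.filter fun e => j + 1 ≤ firstHit σ e).card
      ≤ totalCost E σ := by
    have h1 : ∀ j, (E.filter fun e => j + 1 ≤ firstHit σ e).card
        = ∑ e ∈ E, if j + 1 ≤ firstHit σ e then 1 else 0 :=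
      fun j => by rw [Finset.card_filter]
    calc ∑ j ∈ Finset.range (t + 1), (E.filter fun e => j + 1 ≤ firstHit σ e).card
        = ∑ j ∈ Finset.range (t + 1), ∑ e ∈ E, if j + 1 ≤ firstHit σ e then 1 else 0 :=
          Finset.sum_congr rfl fun j _ => h1 j
      _ = ∑ e ∈ E, ∑ j ∈ Finset.range (t + 1), if j + 1 ≤ firstHit σ e then 1 else 0 :=
          Finset.sum_comm
      _ ≤ ∑ e ∈ E, firstHit σ e := by
          apply Finset.sum_le_sum
          intro e _
          rw [← Finset.card_filter]
          calc ((Finset.range (t + 1)).filter fun j => j + 1 ≤ firstHit σ e).card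
              ≤ (Finset.range (firstHit σ e)).card := by
                apply Finset.card_le_card
                intro j hj
                rw [Finset.mem_filter, Finset.mem_range] at hj
                rw [Finset.mem_range]
                omega
            _ = firstHit σ e := Finset.card_range _
      _ = totalCost E σ := rfl
  -- ==================== STEP 4 : cost upper bound via S-first orderings ====
  have h2cost : 2 * totalCost E σ ≤ m * (t + 1) := by
    have hcard1 : S.card = (Finset.Icc 1 t).card := by rw [Nat.card_Icc]; omega
    have hcard2 : (V \ S).card = (Finset.Icc (t + 1) n).card := by
      rw [Finset.card_sdiff_of_subset hSV, Nat.card_Icc]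
      omega
    set e1 := Finset.equivOfCardEq hcard1 with he1
    set e2 := Finset.equivOfCardEq hcard2 with he2
    set psi : α → ℕ := fun x => if hx : x ∈ S then (e1 ⟨x, hx⟩ : ℕ) else
        if hx2 : x ∈ V \ S then (e2 ⟨x, hx2⟩ : ℕ) else 0 with hpsidef
    have hpsiS : ∀ x (hx : x ∈ S), psi x = (e1 ⟨x, hx⟩ : ℕ) := fun x hx => dif_pos hx
    have hpsiVS : ∀ x (hx : x ∈ V \ S), psi x = (e2 ⟨x, hx⟩ : ℕ) := by
      intro x hx
      have hxS : x ∉ S := (Finset.mem_sdiff.1 hx).2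
      show (if hx' : x ∈ S then (e1 ⟨x, hx'⟩ : ℕ) else
        if hx2 : x ∈ V \ S then (e2 ⟨x, hx2⟩ : ℕ) else 0) = (e2 ⟨x, hx⟩ : ℕ)
      rw [dif_neg hxS, dif_pos hx]
    have hpsimemS : ∀ x, x ∈ S → 1 ≤ psi x ∧ psi x ≤ t := by
      intro x hx
      rw [hpsiS x hx]
      have h := (e1 ⟨x, hx⟩).2
      rw [Finset.mem_Icc] at h
      exact h
    have hpsimemVS : ∀ x (hx : x ∈ V \ S), t + 1 ≤ psi x ∧ psi x ≤ n := by
      intro x hx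
      rw [hpsiVS x hx]
      have h := (e2 ⟨x, hx⟩).2
      rw [Finset.mem_Icc] at h
      exact h
    have hpsiinj : Set.InjOn psi ↑V := by
      intro x hxV y hyV hxy
      by_cases hxS : x ∈ S <;> by_cases hyS : y ∈ S
      · rw [hpsiS x hxS, hpsiS y hyS] at hxy
        have := e1.injective (Subtype.ext hxy)
        exact congrArg Subtype.val this
      · exfalso
        have h1 := hpsimemS x hxS
        have h2 := hpsimemVS y (Finset.mem_sdiff.2 ⟨Finset.mem_coe.1 hyV, hyS⟩)
        omega
      · exfalso
        have h1 := hpsimemS y hyS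
        have h2 := hpsimemVS x (Finset.mem_sdiff.2 ⟨Finset.mem_coe.1 hxV, hxS⟩)
        omega
      · have hx' : x ∈ V \ S := Finset.mem_sdiff.2 ⟨Finset.mem_coe.1 hxV, hxS⟩
        have hy' : y ∈ V \ S := Finset.mem_sdiff.2 ⟨Finset.mem_coe.1 hyV, hyS⟩
        rw [hpsiVS x hx', hpsiVS y hy'] at hxy
        have := e2.injective (Subtype.ext hxy)
        exact congrArg Subtype.val this
    have hpsisurj : Set.SurjOn psi ↑V (Set.Icc 1 n) := by
      intro y hy
      rw [Set.mem_Icc] at hy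
      by_cases hyt : y ≤ t
      · have hym : y ∈ Finset.Icc 1 t := Finset.mem_Icc.2 ⟨hy.1, hyt⟩
        refine ⟨(e1.symm ⟨y, hym⟩).1, Finset.mem_coe.2 (hSV (e1.symm ⟨y, hym⟩).2), ?_⟩
        rw [hpsiS _ (e1.symm ⟨y, hym⟩).2]
        show ((e1 (e1.symm ⟨y, hym⟩) : _) : ℕ) = y
        rw [Equiv.apply_symm_apply]
      · have hym : y ∈ Finset.Icc (t + 1) n := Finset.mem_Icc.2 ⟨by omega, hy.2⟩
        have hz2 := (e2.symm ⟨y, hym⟩).2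
        refine ⟨(e2.symm ⟨y, hym⟩).1, Finset.mem_coe.2 ((Finset.mem_sdiff.1 hz2).1), ?_⟩
        rw [hpsiVS _ hz2]
        show ((e2 (e2.symm ⟨y, hym⟩) : _) : ℕ) = y
        rw [Equiv.apply_symm_apply]
    have hpsiord : IsOrdering V psi := by
      refine ⟨?_, hpsiinj, hpsisurj⟩
      intro x hxV
      by_cases hxS : x ∈ S
      · have := hpsimemS x hxS
        rw [Set.mem_Icc]
        omega
      · have := hpsimemVS x (Finset.mem_sdiff.2 ⟨Finset.mem_coe.1 hxV, hxS⟩)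
        rw [Set.mem_Icc]
        omega
    set psi' : α → ℕ := fun x => if x ∈ S then t + 1 - psi x else psi x with hpsi'def
    have hpsi'S : ∀ x, x ∈ S → psi' x = t + 1 - psi x := fun x hx => if_pos hx
    have hpsi'nS : ∀ x, x ∉ S → psi' x = psi x := fun x hx => if_neg hx
    have hpsi'memS : ∀ x, x ∈ S → 1 ≤ psi' x ∧ psi' x ≤ t := by
      intro x hx
      rw [hpsi'S x hx]
      have := hpsimemS x hx
      omega
    have hpsi'ord : IsOrdering V psi' := by
      refine ⟨?_, ?_, ?_⟩
      · intro x hxV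
        by_cases hxS : x ∈ S
        · have := hpsi'memS x hxS
          rw [Set.mem_Icc]
          omega
        · rw [hpsi'nS x hxS]
          have := hpsimemVS x (Finset.mem_sdiff.2 ⟨Finset.mem_coe.1 hxV, hxS⟩)
          rw [Set.mem_Icc]
          omega
      · intro x hxV y hyV hxy
        by_cases hxS : x ∈ S <;> by_cases hyS : y ∈ S
        · rw [hpsi'S x hxS, hpsi'S y hyS] at hxy
          have h1 := hpsimemS x hxS
          have h2 := hpsimemS y hyS
          exact hpsiinj hxV hyV (by omega)
        · exfalso
          rw [hpsi'S x hxS, hpsi'nS y hyS] at hxy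
          have h1 := hpsimemS x hxS
          have h2 := hpsimemVS y (Finset.mem_sdiff.2 ⟨Finset.mem_coe.1 hyV, hyS⟩)
          omega
        · exfalso
          rw [hpsi'nS x hxS, hpsi'S y hyS] at hxy
          have h1 := hpsimemS y hyS
          have h2 := hpsimemVS x (Finset.mem_sdiff.2 ⟨Finset.mem_coe.1 hxV, hxS⟩)
          omega
        · rw [hpsi'nS x hxS, hpsi'nS y hyS] at hxy
          exact hpsiinj hxV hyV hxy
      · intro y hy
        rw [Set.mem_Icc] at hy
        by_cases hyt : y ≤ t
        · have hym : t + 1 - y ∈ Finset.Icc 1 t := Finset.mem_Icc.2 (by omega)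
          have hz2 := (e1.symm ⟨t + 1 - y, hym⟩).2
          refine ⟨(e1.symm ⟨t + 1 - y, hym⟩).1, Finset.mem_coe.2 (hSV hz2), ?_⟩
          rw [hpsi'S _ hz2]
          have hval : psi (e1.symm ⟨t + 1 - y, hym⟩).1 = t + 1 - y := by
            rw [hpsiS _ hz2]
            show ((e1 (e1.symm ⟨t + 1 - y, hym⟩) : _) : ℕ) = t + 1 - y
            rw [Equiv.apply_symm_apply]
          rw [hval]
          omega
        · have hym : y ∈ Finset.Icc (t + 1) n := Finset.mem_Icc.2 ⟨by omega, hy.2⟩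
          have hz2 := (e2.symm ⟨y, hym⟩).2
          refine ⟨(e2.symm ⟨y, hym⟩).1, Finset.mem_coe.2 ((Finset.mem_sdiff.1 hz2).1), ?_⟩
          rw [hpsi'nS _ (Finset.mem_sdiff.1 hz2).2, hpsiVS _ hz2]
          show ((e2 (e2.symm ⟨y, hym⟩) : _) : ℕ) = y
          rw [Equiv.apply_symm_apply]
    have hpair : ∀ e ∈ E, firstHit psi e + firstHit psi' e ≤ t + 1 := by
      intro e he
      obtain ⟨x, hxint⟩ := hScov e he
      rw [Finset.mem_inter] at hxint
      obtain ⟨hxe, hxS⟩ := hxint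
      have h1 : firstHit psi e ≤ psi x := firstHit_le psi hxe
      have h2 : firstHit psi' e ≤ psi' x := firstHit_le psi' hxe
      have h3 := hpsimemS x hxS
      rw [hpsi'S x hxS] at h2
      omega
    have hc1 := hopt psi hpsiord
    have hc2 := hopt psi' hpsi'ord
    have hsum : totalCost E psi + totalCost E psi' ≤ m * (t + 1) := by
      unfold totalCost
      rw [← Finset.sum_add_distrib]
      calc ∑ e ∈ E, (firstHit psi e + firstHit psi' e) ≤ ∑ e ∈ E, (t + 1) :=
            Finset.sum_le_sum hpair
        _ = m * (t + 1) := by rw [Finset.sum_const, smul_eq_mul]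
    omega
  -- ==================== STEP 5 : combine ====================
  have hmain : m ≤ c * t := by
    have hsum := Finset.sum_le_sum (fun j (_ : j ∈ Finset.range (t + 1)) => hM j)
    rw [Finset.sum_const, Finset.card_range, smul_eq_mul, Finset.sum_add_distrib,
      ← Finset.sum_mul] at hsum
    have hgauss : (∑ j ∈ Finset.range (t + 1), j) * 2 = (t + 1) * t := by
      rw [Finset.sum_range_id_mul_two]
      simp
    have h1 : (t + 1) * m ≤ (∑ j ∈ Finset.range (t + 1), j) * c + totalCost E σ :=
      le_trans hsum (by
        exact add_le_add_right hSumA _)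
    have h4 : (t + 1) * m ≤ (t + 1) * (c * t) := by nlinarith [h1, hgauss, h2cost]
    exact Nat.le_of_mul_le_mul_left h4 (by omega)
  have hcov1 : coverage E σ 1 = c := by
    rw [coverage, hc]
  rw [hcov1]
  rw [div_le_iff₀ (by exact_mod_cast htS : (0:ℝ) < (S.card : ℝ))]
  exact_mod_cast hmain
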